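/- Let X be a Hilbert space and A, B nonempty closed convex subsets with E = {a ∈ A : dist(a,B) = dist(A,B)} nonempty and bounded, and v the displacement vector. If (A,B) is boundedly regular, then (A,B) is regular. -/

import Mathlib

open Pointwise

/-- `p` is the metric projection of `x` onto the set `C`. -/
def IsProjPt {X : Type*} [NormedAddCommGroup X] (C : Set X) (x p : X) : Prop :=
  p ∈ C ∧ ∀ y ∈ C, dist x p ≤ dist x y

open Metric in
/-- Convexity-type estimate for `infDist`. -/
lemma infDist_segment_le {X : Type*} [NormedAddCommGroup X] [NormedSpace ℝ X]
    {C : Set X} (hC : Convex ℝ C) {e x : X} (he : e ∈ C) {t : ℝ}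
    (ht0 : 0 < t) (ht1 : t ≤ 1) :
    infDist (e + t • (x - e)) C ≤ t * infDist x C := by
  have hCne : C.Nonempty := ⟨e, he⟩
  have key : ∀ a ∈ C, infDist (e + t • (x - e)) C ≤ t * dist x a := by
    intro a ha
    have hmem : (1 - t) • e + t • a ∈ C :=
      hC he ha (by linarith) ht0.le (by ring)
    have hle := infDist_le_dist_of_mem (x := e + t • (x - e)) hmem
    have : dist (e + t • (x - e)) ((1 - t) • e + t • a) = t * dist x a := by
      rw [dist_eq_norm, dist_eq_norm]
      have : e + t • (x - e) - ((1 - t) • e + t • a) = t • (x - a) := by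
        module
      rw [this, norm_smul, Real.norm_eq_abs, abs_of_pos ht0]
    linarith [hle, this.le]
  have h2 : infDist (e + t • (x - e)) C / t ≤ infDist x C := by
    have : Nonempty C := hCne.to_subtype
    rw [infDist_eq_iInf (x := x)]
    refine le_ciInf fun a => ?_
    rw [div_le_iff₀ ht0, mul_comm]
    exact key a a.2
  calc infDist (e + t • (x - e)) C = t * (infDist (e + t • (x - e)) C / t) := by
        field_simp
    _ ≤ t * infDist x C := by nlinarith [h2]

set_option maxHeartbeats 1000000 in
open RealInnerProductSpace Metric in
/-- If `e ∈ A` attains the minimal distance between `A` and `B`, and `v` is the minimal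
norm element of `closure (B - A)`, then `e + v ∈ B`. -/
lemma mem_B_of_E {X : Type*} [NormedAddCommGroup X] [InnerProductSpace ℝ X] [CompleteSpace X]
    (A B : Set X) (hBne : B.Nonempty) (hBc : IsClosed B)
    (hAconv : Convex ℝ A) (hBconv : Convex ℝ B)
    (v : X) (hvK : v ∈ closure (B - A)) (hvmin : ∀ y ∈ closure (B - A), dist 0 v ≤ dist 0 y)
    {e : X} (heA : e ∈ A) (hed : infDist e B = ⨅ a' : A, infDist (a' : X) B) :
    e + v ∈ B := by
  set K := closure (B - A) with hK
  have hKconv : Convex ℝ K := (hBconv.sub hAconv).closure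
  obtain ⟨b, hbB, hb⟩ := exists_norm_eq_iInf_of_complete_convex hBne hBc.isComplete hBconv e
  have hNB : Nonempty B := hBne.to_subtype
  have hNA : Nonempty A := ⟨e, heA⟩
  have hbd : ‖e - b‖ = infDist e B := by
    rw [hb, infDist_eq_iInf]
    congr 1; ext w; rw [dist_eq_norm]
  set d := ⨅ a' : A, infDist (a' : X) B with hd
  have hd_le : ∀ a ∈ A, d ≤ infDist a B := fun a ha =>
    ciInf_le (f := fun a' : A => infDist (a' : X) B) ⟨0, by rintro _ ⟨a', rfl⟩; exact infDist_nonneg⟩ ⟨a, ha⟩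
  have hmin : ∀ w ∈ K, d ≤ ‖w‖ := by
    have hsub : B - A ⊆ {w : X | d ≤ ‖w‖} := by
      rintro _ ⟨b', hb', a', ha', rfl⟩
      have h1 : infDist a' B ≤ dist a' b' := infDist_le_dist_of_mem hb'
      have h2 := hd_le a' ha'
      have h3 : dist a' b' = ‖b' - a'‖ := dist_eq_norm' a' b'
      simp only [Set.mem_setOf_eq]
      linarith [h3 ▸ h1]
    intro w hw
    exact closure_minimal hsub (isClosed_le continuous_const continuous_norm) hw
  have hpK : b - e ∈ K := subset_closure (Set.sub_mem_sub hbB heA)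
  have hpnorm : ‖b - e‖ = d := by rw [norm_sub_rev, hbd, hed]
  have hNK : Nonempty K := ⟨⟨b - e, hpK⟩⟩
  have hbdd : BddBelow (Set.range fun w : K => ‖(0 : X) - (w : X)‖) :=
    ⟨0, by rintro _ ⟨w, rfl⟩; exact norm_nonneg _⟩
  have ep : ‖(0 : X) - (b - e)‖ = ⨅ w : K, ‖(0 : X) - (w : X)‖ := by
    refine le_antisymm (le_ciInf fun w => ?_) (ciInf_le hbdd ⟨b - e, hpK⟩)
    simp only [zero_sub, norm_neg]
    rw [hpnorm]; exact hmin w w.2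
  have ev : ‖(0 : X) - v‖ = ⨅ w : K, ‖(0 : X) - (w : X)‖ := by
    refine le_antisymm (le_ciInf fun w => ?_) (ciInf_le hbdd ⟨v, hvK⟩)
    simpa [dist_eq_norm] using hvmin w w.2
  have h1 := (norm_eq_iInf_iff_real_inner_le_zero hKconv hpK).1 ep v hvK
  have h2 := (norm_eq_iInf_iff_real_inner_le_zero hKconv hvK).1 ev (b - e) hpK
  have hveq : v = b - e := by
    have expand : ⟪v - (b - e), v - (b - e)⟫ =
        ⟪(0 : X) - (b - e), v - (b - e)⟫ + ⟪(0 : X) - v, (b - e) - v⟫ := by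
      simp only [zero_sub, inner_neg_left, inner_sub_left, inner_sub_right]
      linarith [real_inner_comm b v, real_inner_comm e v, real_inner_comm e b]
    have hsum : ⟪v - (b - e), v - (b - e)⟫ ≤ 0 := by rw [expand]; linarith
    exact sub_eq_zero.mp (real_inner_self_nonpos.1 hsum)
  rw [hveq]
  simpa using hbB

theorem stmt4 {X : Type*} [NormedAddCommGroup X] [InnerProductSpace ℝ X] [CompleteSpace X]
    (A B : Set X) (hAne : A.Nonempty) (hBne : B.Nonempty)
    (hAc : IsClosed A) (hBc : IsClosed B) (hAconv : Convex ℝ A) (hBconv : Convex ℝ B)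
    (v : X) (hv : IsProjPt (closure (B - A)) 0 v)
    (E : Set X)
    (hE : E = {a ∈ A | Metric.infDist a B = ⨅ a' : A, Metric.infDist (a' : X) B})
    (hEne : E.Nonempty) (hEbdd : Bornology.IsBounded E)
    (hbreg : ∀ S : Set X, Bornology.IsBounded S → ∀ ε > (0 : ℝ), ∃ δ > (0 : ℝ), ∀ x ∈ S,
      max (Metric.infDist x A) (Metric.infDist x ((· - v) '' B)) ≤ δ →
        Metric.infDist x E ≤ ε) :
    ∀ ε > (0 : ℝ), ∃ δ > (0 : ℝ), ∀ x : X,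
      max (Metric.infDist x A) (Metric.infDist x ((· - v) '' B)) ≤ δ →
        Metric.infDist x E ≤ ε := by
  intro ε hε
  obtain ⟨e, heE⟩ := hEne
  have heA : e ∈ A := by rw [hE] at heE; exact heE.1
  have hed : Metric.infDist e B = ⨅ a' : A, Metric.infDist (a' : X) B := by
    rw [hE] at heE; exact heE.2
  have hevB : e + v ∈ B :=
    mem_B_of_E A B hBne hBc hAconv hBconv v hv.1 (fun y hy => hv.2 y hy) heA hed
  set B' := (· - v) '' B with hB'
  have heB' : e ∈ B' := ⟨e + v, hevB, by simp⟩
  have hB'conv : Convex ℝ B' := by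
    have heq : B' = (fun x => -v + x) '' B := by
      ext w; simp [hB', sub_eq_neg_add, add_comm]
    rw [heq]; exact hBconv.translate (-v)
  obtain ⟨R, hR⟩ := hEbdd.subset_closedBall e
  have hR0 : 0 ≤ R := by simpa using hR heE
  set r := R + ε + 1 with hr
  obtain ⟨δ, hδ0, hδ⟩ := hbreg (Metric.closedBall e r) Metric.isBounded_closedBall ε hε
  refine ⟨δ, hδ0, fun x hx => ?_⟩
  have hxA : Metric.infDist x A ≤ δ := le_trans (le_max_left _ _) hx
  have hxB' : Metric.infDist x B' ≤ δ := le_trans (le_max_right _ _) hx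
  by_cases hcase : dist x e ≤ r
  · exact hδ x (Metric.mem_closedBall.2 hcase) hx
  · exfalso
    push_neg at hcase
    have hrpos : 0 < r := by rw [hr]; linarith
    have hdpos : 0 < dist x e := lt_trans hrpos hcase
    set t := r / dist x e with ht
    have ht0 : 0 < t := div_pos hrpos hdpos
    have ht1 : t ≤ 1 := (div_le_one hdpos).2 hcase.le
    set y := e + t • (x - e) with hy
    have hyA : Metric.infDist y A ≤ δ :=
      calc Metric.infDist y A ≤ t * Metric.infDist x A :=
            infDist_segment_le hAconv heA ht0 ht1
        _ ≤ δ := by nlinarith [Metric.infDist_nonneg (x := x) (s := A)]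
    have hyB' : Metric.infDist y B' ≤ δ :=
      calc Metric.infDist y B' ≤ t * Metric.infDist x B' :=
            infDist_segment_le hB'conv heB' ht0 ht1
        _ ≤ δ := by nlinarith [Metric.infDist_nonneg (x := x) (s := B')]
    have hye : dist y e = r := by
      have h1 : dist y e = t * dist x e := by
        rw [hy, dist_eq_norm]
        simp only [add_sub_cancel_left]
        rw [norm_smul, Real.norm_eq_abs, abs_of_pos ht0, ← dist_eq_norm]
      rw [h1, ht, div_mul_cancel₀ _ hdpos.ne']
    have hyE : Metric.infDist y E ≤ ε := by
      refine hδ y ?_ (max_le hyA hyB')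
      rw [Metric.mem_closedBall, hye]
    have hlow : ε + 1 ≤ Metric.infDist y E := by
      have hNE : Nonempty E := ⟨e, heE⟩
      rw [Metric.infDist_eq_iInf]
      refine le_ciInf fun z => ?_
      have hz : dist (z : X) e ≤ R := Metric.mem_closedBall.1 (hR z.2)
      have htri : dist y e ≤ dist y z + dist (z : X) e := dist_triangle _ _ _
      rw [hye] at htri
      linarith
    linarith
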